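/- Under the exchange-trace hypotheses, f(A) ≤ ((c + 1)/c)·f(S_n). -/

import Mathlib

open Finset

/-- The ground set is `Fin n`, with the arrival order given by the order on `Fin n`
(`u_i` is identified with `i`). A set function `f` is submodular if
`f(A ∪ {u}) − f(A) ≥ f(B ∪ {u}) − f(B)` for all `A ⊆ B` and `u ∉ B`. -/
def Submodular {n : ℕ} (f : Finset (Fin n) → ℝ) : Prop :=
  ∀ A B : Finset (Fin n), ∀ u : Fin n, A ⊆ B → u ∉ B →
    f (insert u B) - f B ≤ f (insert u A) - f A

/-- `f(u_i : A) = f(u_i | A ∩ {u_1, …, u_{i−1}})`. -/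
noncomputable def margCut {n : ℕ} (f : Finset (Fin n) → ℝ) (i : Fin n)
    (A : Finset (Fin n)) : ℝ :=
  f (insert i (A.filter fun j => j < i)) - f (A.filter fun j => j < i)

/-- `f(B : A) = Σ_{u_i ∈ B} f(u_i : A)`. -/
noncomputable def margCutSet {n : ℕ} (f : Finset (Fin n) → ℝ)
    (B A : Finset (Fin n)) : ℝ :=
  ∑ i ∈ B, margCut f i A

/-- Exchange-trace hypotheses: `S 0 = ∅` and, for every arriving element `u_i`
(identified with `i : Fin n`), either (a) `S (i+1) = S i` and `U (i+1) = ∅`, or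
(b) `U (i+1) ⊆ S i`, `u_i ∉ S i`, `S (i+1) = (S i \ U (i+1)) ∪ {u_i}` and
`f(u_i | S i) ≥ (1 + c)·f(U (i+1) : S i)`. -/
def ExchangeTrace {n : ℕ} (f : Finset (Fin n) → ℝ) (c : ℝ)
    (S U : ℕ → Finset (Fin n)) : Prop :=
  S 0 = ∅ ∧
  ∀ i : Fin n,
    (S (i.1 + 1) = S i.1 ∧ U (i.1 + 1) = ∅) ∨
    (U (i.1 + 1) ⊆ S i.1 ∧ i ∉ S i.1 ∧
      S (i.1 + 1) = (S i.1 \ U (i.1 + 1)) ∪ {i} ∧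
      (1 + c) * margCutSet f (U (i.1 + 1)) (S i.1) ≤
        f (insert i (S i.1)) - f (S i.1))

section Aux

variable {n : ℕ} {f : Finset (Fin n) → ℝ}

lemma margCut_le_aux (hf : Submodular f) {A T : Finset (Fin n)} {u : Fin n}
    (hsub : A.filter (fun j => j < u) ⊆ T) (hu : u ∉ T) :
    f (insert u T) - f T ≤ margCut f u A :=
  hf _ T u hsub hu

lemma removal_lemma (hf : Submodular f) (V : Finset (Fin n)) :
    ∀ (T : Finset (Fin n)) (i : Fin n), V ⊆ T → i ∉ T →
    f (insert i T) - f (insert i (T \ V)) ≤ margCutSet f V T := by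
  induction V using Finset.induction_on_min with
  | empty => intro T i _ _; simp [margCutSet]
  | insert a s hlt ih =>
    intro T i hVT hi
    have haT : a ∈ T := hVT (mem_insert_self a s)
    have hsT : s ⊆ T := fun x hx => hVT (mem_insert_of_mem hx)
    have has : a ∉ s := fun h => lt_irrefl a (hlt a h)
    have haTs : a ∈ T \ s := mem_sdiff.2 ⟨haT, has⟩
    have hai : a ≠ i := fun h => hi (h ▸ haT)
    have key : T \ insert a s = (T \ s).erase a := by
      ext x
      simp only [mem_sdiff, mem_insert, mem_erase, not_or]
      tauto
    have hset : insert i (T \ s) = insert a (insert i (T \ insert a s)) := by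
      rw [key, Finset.insert_comm, Finset.insert_erase haTs]
    have h1 : f (insert i T) - f (insert i (T \ s)) ≤ margCutSet f s T :=
      ih T i hsT hi
    have h2 : f (insert i (T \ s)) - f (insert i (T \ insert a s)) ≤ margCut f a T := by
      rw [hset]
      apply margCut_le_aux hf
      · intro x hx
        obtain ⟨hxT, hxa⟩ := mem_filter.1 hx
        refine mem_insert_of_mem (mem_sdiff.2 ⟨hxT, ?_⟩)
        simp only [mem_insert, not_or]
        exact ⟨ne_of_lt hxa, fun hxs => absurd (lt_trans hxa (hlt x hxs)) (lt_irrefl x)⟩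
      · simp only [mem_insert, not_or]
        refine ⟨hai, ?_⟩
        simp [mem_sdiff]
    have hsum : margCutSet f (insert a s) T = margCut f a T + margCutSet f s T := by
      simp [margCutSet, Finset.sum_insert has]
    linarith

end Aux

/-- Under the exchange-trace hypotheses, with `A = ⋃_{i=1}^n S i`,
`f(A) ≤ ((c + 1)/c)·f(S n)`. -/
theorem value_A_le {n : ℕ} (f : Finset (Fin n) → ℝ)
    (hf : Submodular f) (hnn : ∀ X : Finset (Fin n), 0 ≤ f X)
    (c : ℝ) (hc : 0 < c) (S U : ℕ → Finset (Fin n))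
    (htrace : ExchangeTrace f c S U) :
    f ((Finset.range n).biUnion fun i => S (i + 1)) ≤
      ((c + 1) / c) * f (S n) := by
  obtain ⟨hS0, hstep⟩ := htrace
  -- every element of `S i` (for `i ≤ n`) has index `< i`
  have hmem : ∀ i, i ≤ n → ∀ u ∈ S i, (u : ℕ) < i := by
    intro i
    induction i with
    | zero => intro _ u hu; rw [hS0] at hu; exact absurd hu (notMem_empty u)
    | succ i ih =>
      intro hin u hu
      have hi : i < n := lt_of_lt_of_le (Nat.lt_succ_self i) hin
      rcases hstep ⟨i, hi⟩ with ⟨hSeq, _⟩ | ⟨_, _, hSeq, _⟩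
      · have := ih hi.le u (by rw [← hSeq]; exact hu)
        omega
      · rw [hSeq] at hu
        rcases mem_union.1 hu with h | h
        · have := ih hi.le u (mem_sdiff.1 h).1; omega
        · have : u = ⟨i, hi⟩ := mem_singleton.1 h
          rw [this]; exact Nat.lt_succ_self i
  have main : ∀ i, i ≤ n →
      f ((Finset.range (i+1)).biUnion S) ≤
        f (S i) + ∑ j ∈ Finset.range i, margCutSet f (U (j+1)) (S j) ∧
      c * ∑ j ∈ Finset.range i, margCutSet f (U (j+1)) (S j) ≤ f (S i) := by
    intro i
    induction i with
    | zero =>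
      intro _
      constructor
      · simp [hS0]
      · simpa using mul_nonneg hc.le (le_of_eq rfl) |>.trans (by simp [hnn])
    | succ i ih =>
      intro hin
      have hi : i < n := lt_of_lt_of_le (Nat.lt_succ_self i) hin
      obtain ⟨ih1, ih2⟩ := ih hi.le
      have hBsucc : (Finset.range (i+2)).biUnion S
          = S (i+1) ∪ (Finset.range (i+1)).biUnion S := by
        rw [Finset.range_add_one, Finset.biUnion_insert]
      rcases hstep ⟨i, hi⟩ with ⟨hSeq, hUeq⟩ | ⟨hUsub, hiS, hSeq, hgain⟩
      · have hSsub : S (i+1) ⊆ (Finset.range (i+1)).biUnion S := by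
          rw [hSeq]
          exact Finset.subset_biUnion_of_mem S (Finset.mem_range.2 (Nat.lt_succ_self i))
        have hB : (Finset.range (i+2)).biUnion S = (Finset.range (i+1)).biUnion S := by
          rw [hBsucc]; exact Finset.union_eq_right.2 hSsub
        have hU0 : margCutSet f (U (i+1)) (S i) = 0 := by
          rw [hUeq]; simp [margCutSet]
        rw [Finset.sum_range_succ, hU0, hB, hSeq]
        constructor <;> linarith
      · set k : Fin n := ⟨i, hi⟩ with hk
        have hSnext : S (i+1) = insert k (S i \ U (i+1)) := by
          rw [hSeq, Finset.insert_eq, Finset.union_comm]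
        have hrem : f (insert k (S i)) - f (S (i+1)) ≤ margCutSet f (U (i+1)) (S i) := by
          rw [hSnext]; exact removal_lemma hf (U (i+1)) (S i) k hUsub hiS
        have hkB : k ∉ (Finset.range (i+1)).biUnion S := by
          intro h
          obtain ⟨j, hj, hkj⟩ := Finset.mem_biUnion.1 h
          have hjn : j ≤ n := le_trans (Nat.lt_succ_iff.1 (Finset.mem_range.1 hj)) hi.le
          have := hmem j hjn k hkj
          have hkv : (k : ℕ) = i := rfl
          have := Finset.mem_range.1 hj
          omega
        have hTB : S i ⊆ (Finset.range (i+1)).biUnion S :=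
          Finset.subset_biUnion_of_mem S (Finset.mem_range.2 (Nat.lt_succ_self i))
        have hBeq : (Finset.range (i+2)).biUnion S
            = insert k ((Finset.range (i+1)).biUnion S) := by
          rw [hBsucc, hSnext, Finset.insert_union]
          congr 1
          exact Finset.union_eq_right.2 (fun x hx => hTB (Finset.mem_sdiff.1 hx).1)
        have hsubm : f (insert k ((Finset.range (i+1)).biUnion S))
            - f ((Finset.range (i+1)).biUnion S) ≤ f (insert k (S i)) - f (S i) :=
          hf (S i) _ k hTB hkB
        rw [Finset.sum_range_succ]
        constructor
        · rw [hBeq]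
          have := hgain
          nlinarith [ih1, hsubm, hrem, hgain]
        · have hQ : f (S i) + c * margCutSet f (U (i+1)) (S i) ≤ f (S (i+1)) := by
            nlinarith [hgain, hrem]
          rw [mul_add]
          linarith
  obtain ⟨h1, h2⟩ := main n le_rfl
  have hA : ((Finset.range n).biUnion fun i => S (i + 1))
      = (Finset.range (n+1)).biUnion S := by
    ext u
    simp only [Finset.mem_biUnion, Finset.mem_range]
    constructor
    · rintro ⟨j, hj, hu⟩; exact ⟨j+1, by omega, hu⟩
    · rintro ⟨j, hj, hu⟩
      match j with
      | 0 => rw [hS0] at hu; exact absurd hu (notMem_empty u)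
      | m+1 => exact ⟨m, by omega, hu⟩
  have hfinal : ((c + 1) / c) * f (S n) = f (S n) + f (S n) / c := by
    field_simp
  have hdiv : ∑ j ∈ Finset.range n, margCutSet f (U (j+1)) (S j) ≤ f (S n) / c := by
    rw [le_div_iff₀ hc]; linarith
  rw [hA, hfinal]
  linarith
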